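/- Let A and B be finite subsets of a group G with A ⊆ ⟨g⟩ (a subset of the cyclic subgroup generated by g in G = H ⋊ ℤ) and B ⊆ H, such that the products ab for a ∈ A, b ∈ B are pairwise distinct. Let K ⊆ H be finite and δ > 0, and suppose that for every g^i ∈ A the set B is (α^{-i}(K), δ)-invariant in H. Then the rectangle AB is (K, δ)-invariant in G. -/
import Mathlib


open Set SemidirectProduct

/-- The `K`-boundary of a subset `F` of a group `G`. -/
def kBoundary {G : Type*} [Group G] (K F : Set G) : Set G :=
  {t | (∃ k ∈ K, k * t ∈ F) ∧ (∃ k ∈ K, k * t ∉ F)}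

/-- `F` is `(K, δ)`-invariant if `|∂_K F| ≤ δ |F|`. -/
def FolnerInvariant {G : Type*} [Group G] (K F : Set G) (δ : ℝ) : Prop :=
  ((kBoundary K F).ncard : ℝ) ≤ δ * F.ncard

/-- In `G = H ⋊_α ℤ`: let `A = { g^i : i ∈ I } ⊆ ⟨g⟩` and `B ⊆ H` be finite sets whose
products `a b` are pairwise distinct, let `K ⊆ H` be finite and `δ > 0`. If for every
`g^i ∈ A` the set `B` is `(α^{-i}(K), δ)`-invariant in `H`, then the rectangle `AB` is
`(K, δ)`-invariant in `G`. -/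
lemma my_ncard_biUnion_le {ι X : Type*} (s : Finset ι) (f : ι → Set X) :
    (⋃ i ∈ s, f i).ncard ≤ ∑ i ∈ s, (f i).ncard := by
  classical
  induction s using Finset.induction with
  | empty => simp
  | @insert a s ha ih =>
      rw [Finset.sum_insert ha]
      refine le_trans ?_ (add_le_add le_rfl ih)
      have h : (⋃ i ∈ insert a s, f i) = f a ∪ ⋃ i ∈ s, f i := by
        simp [Set.biUnion_insert]
      rw [h]
      exact Set.ncard_union_le _ _

lemma my_ncard_prod {X Y : Type*} (s : Set X) (t : Set Y) :
    (s ×ˢ t).ncard = s.ncard * t.ncard := by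
  rw [← Nat.card_coe_set_eq, ← Nat.card_coe_set_eq, ← Nat.card_coe_set_eq,
    ← Nat.card_prod]
  exact Nat.card_congr (Equiv.Set.prod s t)

theorem rectangle_invariant {H : Type*} [Group H] (α : MulAut H)
    (I : Set ℤ) (hI : I.Finite) (B : Set H) (hB : B.Finite)
    (K : Set H) (hK : K.Finite) (δ : ℝ) (hδ : 0 < δ)
    (g : H ⋊[zpowersHom (MulAut H) α] Multiplicative ℤ)
    (hg : g = inr (Multiplicative.ofAdd (1 : ℤ)))
    (hinj : ∀ i₁ ∈ I, ∀ i₂ ∈ I, ∀ b₁ ∈ B, ∀ b₂ ∈ B,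
      g ^ i₁ * (inl b₁ : H ⋊[zpowersHom (MulAut H) α] Multiplicative ℤ) =
        g ^ i₂ * inl b₂ → i₁ = i₂ ∧ b₁ = b₂)
    (hBinv : ∀ i ∈ I, FolnerInvariant ((α ^ (-i) : MulAut H) '' K) B δ) :
    FolnerInvariant
      ((inl : H →* H ⋊[zpowersHom (MulAut H) α] Multiplicative ℤ) '' K)
      {x | ∃ i ∈ I, ∃ b ∈ B,
        x = g ^ i * (inl b : H ⋊[zpowersHom (MulAut H) α] Multiplicative ℤ)} δ := by
  classical
  set F : Set (H ⋊[zpowersHom (MulAut H) α] Multiplicative ℤ) :=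
    {x | ∃ i ∈ I, ∃ b ∈ B, x = g ^ i * inl b} with hF
  -- key algebraic lemma
  have hgpow : ∀ (i : ℤ) (c : H),
      g ^ i * inl c = (⟨(α ^ i) c, Multiplicative.ofAdd i⟩ :
        H ⋊[zpowersHom (MulAut H) α] Multiplicative ℤ) := by
    intro i c
    subst hg
    rw [← map_zpow]
    have h1 : (Multiplicative.ofAdd (1:ℤ)) ^ i = Multiplicative.ofAdd i := by
      rw [← ofAdd_zsmul]; simp
    rw [h1]
    ext
    · show (1 : H) * (zpowersHom (MulAut H) α) (Multiplicative.ofAdd i) c = _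
      simp [zpowersHom_apply]
    · show Multiplicative.ofAdd i * 1 = Multiplicative.ofAdd i
      simp
  have hcancel : ∀ (i : ℤ) (b : H), (α ^ (-i)) ((α ^ i) b) = b := by
    intro i b
    have : (α ^ (-i)) ((α ^ i) b) = ((α ^ i)⁻¹ * (α ^ i)) b := by
      rw [zpow_neg]; rfl
    rw [this, inv_mul_cancel]; rfl
  have hcancel' : ∀ (i : ℤ) (b : H), (α ^ i) ((α ^ (-i)) b) = b := by
    intro i b
    have := hcancel (-i) b
    rwa [neg_neg] at this
  have hmemF : ∀ (h : H) (n : Multiplicative ℤ),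
      (⟨h, n⟩ : H ⋊[zpowersHom (MulAut H) α] Multiplicative ℤ) ∈ F ↔
        n.toAdd ∈ I ∧ (α ^ (-n.toAdd)) h ∈ B := by
    intro h n
    constructor
    · rintro ⟨i, hi, b, hb, heq⟩
      rw [hgpow] at heq
      have e1 : h = (α ^ i) b := congrArg SemidirectProduct.left heq
      have e2 : n = Multiplicative.ofAdd i := congrArg SemidirectProduct.right heq
      have e3 : n.toAdd = i := by rw [e2]; rfl
      refine ⟨e3 ▸ hi, ?_⟩
      rw [e3, e1, hcancel]; exact hb
    · rintro ⟨hm, hc⟩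
      refine ⟨n.toAdd, hm, (α ^ (-n.toAdd)) h, hc, ?_⟩
      rw [hgpow, hcancel']
      ext <;> simp
  have hinlmul : ∀ (k h : H) (n : Multiplicative ℤ),
      (inl k : H ⋊[zpowersHom (MulAut H) α] Multiplicative ℤ) * ⟨h, n⟩ = ⟨k * h, n⟩ := by
    intro k h n
    ext
    · show k * (zpowersHom (MulAut H) α) 1 h = k * h
      simp
    · show (1 : Multiplicative ℤ) * n = n
      simp
  -- the comparison map
  set e : (H ⋊[zpowersHom (MulAut H) α] Multiplicative ℤ) → ℤ × H :=
    fun t => (t.right.toAdd, (α ^ (-(t.right.toAdd))) t.left) with he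
  have he_inj : Function.Injective e := by
    intro t t' h
    have hr : t.right = t'.right := by
      have h1 : t.right.toAdd = t'.right.toAdd := congrArg Prod.fst h
      exact Multiplicative.toAdd.injective h1
    have hl : t.left = t'.left := by
      have h2 := congrArg Prod.snd h
      simp only [he] at h2
      rw [← hr] at h2
      exact (α ^ (-(t.right.toAdd))).injective h2
    exact SemidirectProduct.ext hl hr
  set Dm : ℤ → Set H := fun i => kBoundary ((α ^ (-i) : MulAut H) '' K) B with hDm
  have hDfin : ∀ i : ℤ, (Dm i).Finite := by
    intro i
    refine Set.Finite.subset (((hK.image (α ^ (-i) : MulAut H)).inv).mul hB) ?_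
    rintro c ⟨⟨k, hk, hkc⟩, -⟩
    exact ⟨k⁻¹, Set.inv_mem_inv.2 hk, k * c, hkc, inv_mul_cancel_left k c⟩
  -- the image of the boundary
  have hDsub : e '' kBoundary (inl '' K) F ⊆ ⋃ i ∈ I, ({i} ×ˢ Dm i) := by
    rintro - ⟨t, ht, rfl⟩
    obtain ⟨h, n⟩ := t
    obtain ⟨⟨-, ⟨k, hk, rfl⟩, hin⟩, ⟨-, ⟨k2, hk2, rfl⟩, hout⟩⟩ := ht
    rw [hinlmul, hmemF] at hin
    obtain ⟨hmI, hkB⟩ := hin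
    refine Set.mem_biUnion hmI ⟨rfl, ?_, ?_⟩
    · refine ⟨(α ^ (-n.toAdd)) k, ⟨k, hk, rfl⟩, ?_⟩
      rw [← map_mul]; exact hkB
    · refine ⟨(α ^ (-n.toAdd)) k2, ⟨k2, hk2, rfl⟩, fun hcon => hout ?_⟩
      rw [hinlmul, hmemF]
      exact ⟨hmI, by rw [map_mul]; exact hcon⟩
  -- the image of F
  have hFim : e '' F = I ×ˢ B := by
    ext p
    constructor
    · rintro ⟨t, ht, rfl⟩
      obtain ⟨h, n⟩ := t
      rw [hmemF] at ht
      exact ⟨ht.1, ht.2⟩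
    · rintro ⟨hp1, hp2⟩
      refine ⟨⟨(α ^ p.1) p.2, Multiplicative.ofAdd p.1⟩, ?_, ?_⟩
      · rw [hmemF]
        constructor
        · simpa using hp1
        · simpa [hcancel] using hp2
      · simp only [he]
        have : (Multiplicative.ofAdd p.1).toAdd = p.1 := rfl
        rw [this, hcancel]
  -- finiteness of the union
  have hIun : (⋃ i ∈ I, ({i} ×ˢ Dm i)) = ⋃ i ∈ hI.toFinset, ({i} ×ˢ Dm i) := by
    simp
  have hUfin : (⋃ i ∈ I, ({i} ×ˢ Dm i)).Finite :=
    hI.biUnion fun i _ => (Set.finite_singleton i).prod (hDfin i)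
  -- counting
  have hcard1 : (kBoundary (inl '' K) F).ncard ≤ ∑ i ∈ hI.toFinset, (Dm i).ncard := by
    calc (kBoundary (inl '' K) F).ncard
        = (e '' kBoundary (inl '' K) F).ncard :=
          (Set.ncard_image_of_injective _ he_inj).symm
      _ ≤ (⋃ i ∈ I, ({i} ×ˢ Dm i)).ncard := Set.ncard_le_ncard hDsub hUfin
      _ = (⋃ i ∈ hI.toFinset, ({i} ×ˢ Dm i)).ncard := by rw [hIun]
      _ ≤ ∑ i ∈ hI.toFinset, ({i} ×ˢ Dm i).ncard := my_ncard_biUnion_le _ _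
      _ = ∑ i ∈ hI.toFinset, (Dm i).ncard := by
          refine Finset.sum_congr rfl fun i _ => ?_
          rw [my_ncard_prod]; simp
  have hcard2 : F.ncard = I.ncard * B.ncard := by
    rw [← Set.ncard_image_of_injective F he_inj, hFim, my_ncard_prod]
  -- put together
  unfold FolnerInvariant
  have hsum : (↑(∑ i ∈ hI.toFinset, (Dm i).ncard) : ℝ) ≤ hI.toFinset.card * (δ * B.ncard) := by
    push_cast
    calc (∑ i ∈ hI.toFinset, ((Dm i).ncard : ℝ))
        ≤ ∑ _i ∈ hI.toFinset, δ * B.ncard := by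
          refine Finset.sum_le_sum fun i hi => ?_
          exact hBinv i (hI.mem_toFinset.1 hi)
      _ = hI.toFinset.card * (δ * B.ncard) := by
          rw [Finset.sum_const, nsmul_eq_mul]
  have hIcard : (hI.toFinset.card : ℝ) = I.ncard := by
    rw [Set.ncard_eq_toFinset_card _ hI]
  calc ((kBoundary (inl '' K) F).ncard : ℝ)
      ≤ (↑(∑ i ∈ hI.toFinset, (Dm i).ncard) : ℝ) := by exact_mod_cast hcard1
    _ ≤ hI.toFinset.card * (δ * B.ncard) := hsum
    _ = δ * (I.ncard * B.ncard) := by rw [hIcard]; ring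
    _ = δ * F.ncard := by rw [hcard2]; push_cast; ring
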